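/- Let P and Q be orthogonal projections on a real or complex Hilbert space H. Then ker(P + Q - I) = (ran P ∩ ker Q) ⊕ (ker P ∩ ran Q), where the two summands are orthogonal. -/

import Mathlib

/-- For orthogonal projections `P, Q` on a (real or complex) Hilbert space,
`ker(P + Q - I) = (ran P ∩ ker Q) ⊕ (ker P ∩ ran Q)`, the two summands being orthogonal. -/
theorem stmt4 {𝕜 H : Type*} [RCLike 𝕜] [NormedAddCommGroup H] [InnerProductSpace 𝕜 H]
    [CompleteSpace H]
    (P Q : H →L[𝕜] H)
    (hPa : ContinuousLinearMap.adjoint P = P) (hP2 : P * P = P)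
    (hQa : ContinuousLinearMap.adjoint Q = Q) (hQ2 : Q * Q = Q) :
    LinearMap.ker ((P + Q - 1 : H →L[𝕜] H) : H →ₗ[𝕜] H) =
      (LinearMap.range (P : H →ₗ[𝕜] H) ⊓ LinearMap.ker (Q : H →ₗ[𝕜] H)) ⊔ (LinearMap.ker (P : H →ₗ[𝕜] H) ⊓ LinearMap.range (Q : H →ₗ[𝕜] H)) ∧
    (LinearMap.range (P : H →ₗ[𝕜] H) ⊓ LinearMap.ker (Q : H →ₗ[𝕜] H)) ⊓ (LinearMap.ker (P : H →ₗ[𝕜] H) ⊓ LinearMap.range (Q : H →ₗ[𝕜] H)) = ⊥ ∧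
    ∀ x ∈ LinearMap.range (P : H →ₗ[𝕜] H) ⊓ LinearMap.ker (Q : H →ₗ[𝕜] H), ∀ y ∈ LinearMap.ker (P : H →ₗ[𝕜] H) ⊓ LinearMap.range (Q : H →ₗ[𝕜] H),
      (inner 𝕜 x y : 𝕜) = 0 := by
  have hPid : ∀ x : H, P (P x) = P x := fun x => by
    have := congrArg (fun T : H →L[𝕜] H => T x) hP2; simpa using this
  have hQid : ∀ x : H, Q (Q x) = Q x := fun x => by
    have := congrArg (fun T : H →L[𝕜] H => T x) hQ2; simpa using this
  have hPfix : ∀ x : H, x ∈ LinearMap.range (P : H →ₗ[𝕜] H) → P x = x := by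
    rintro x ⟨y, rfl⟩; exact hPid y
  have hQfix : ∀ x : H, x ∈ LinearMap.range (Q : H →ₗ[𝕜] H) → Q x = x := by
    rintro x ⟨y, rfl⟩; exact hQid y
  refine ⟨?_, ?_, ?_⟩
  · apply le_antisymm
    · intro x hx
      have hx' : P x + Q x - x = 0 := by
        simpa [ContinuousLinearMap.sub_apply, ContinuousLinearMap.add_apply] using hx
      have hsum : P x + Q x = x := by
        have := sub_eq_zero.mp hx'; exact this
      have hPQ : P (Q x) = 0 := by
        have h := congrArg P hsum
        simp only [map_add, hPid] at h
        exact (add_eq_left).mp h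
      have hQP : Q (P x) = 0 := by
        have h := congrArg Q hsum
        simp only [map_add, hQid] at h
        exact (add_eq_right).mp h
      have h1 : P x ∈ LinearMap.range (P : H →ₗ[𝕜] H) ⊓ LinearMap.ker (Q : H →ₗ[𝕜] H) :=
        ⟨⟨x, rfl⟩, hQP⟩
      have h2 : Q x ∈ LinearMap.ker (P : H →ₗ[𝕜] H) ⊓ LinearMap.range (Q : H →ₗ[𝕜] H) :=
        ⟨hPQ, ⟨x, rfl⟩⟩
      have : P x + Q x ∈ (LinearMap.range (P : H →ₗ[𝕜] H) ⊓ LinearMap.ker (Q : H →ₗ[𝕜] H)) ⊔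
          (LinearMap.ker (P : H →ₗ[𝕜] H) ⊓ LinearMap.range (Q : H →ₗ[𝕜] H)) :=
        Submodule.add_mem_sup h1 h2
      rwa [hsum] at this
    · apply sup_le
      · rintro x ⟨hxr, hxk⟩
        have hPx : P x = x := hPfix x hxr
        have hQx : Q x = (0 : H) := hxk
        show (P + Q - 1) x = 0
        simp [ContinuousLinearMap.sub_apply, ContinuousLinearMap.add_apply, hPx, hQx]
      · rintro x ⟨hxk, hxr⟩
        have hQx : Q x = x := hQfix x hxr
        have hPx : P x = (0 : H) := hxk
        show (P + Q - 1) x = 0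
        simp [ContinuousLinearMap.sub_apply, ContinuousLinearMap.add_apply, hPx, hQx]
  · rw [Submodule.eq_bot_iff]
    rintro x ⟨⟨hxr, _⟩, ⟨hxk, _⟩⟩
    have := hPfix x hxr
    rw [show P x = (0 : H) from hxk] at this
    exact this.symm
  · rintro x ⟨hxr, -⟩ y ⟨hyk, -⟩
    have hx : P x = x := hPfix x hxr
    calc (inner 𝕜 x y : 𝕜) = inner 𝕜 (P x) y := by rw [hx]
      _ = inner 𝕜 ((ContinuousLinearMap.adjoint P) x) y := by rw [hPa]
      _ = inner 𝕜 x (P y) := ContinuousLinearMap.adjoint_inner_left P y x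
      _ = 0 := by rw [show P y = (0 : H) from hyk]; simp
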